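/- arXiv:math/9911088 — 2 statements merged into one kernel-verified Lean document; each statement's English description precedes it below -/
import Mathlib

section
/- Let f be a polynomial in n+1 variables X₁, …, Xₙ, L over ℂ such that for every nonzero z ∈ ℂ, substituting z·Xᵢ for each Xᵢ and z⁻¹·L for L leaves f unchanged as a polynomial. Then f lies in the ℂ-subalgebra generated by the n products X₁L, X₂L, …, XₙL. (The ring of invariants for the ℂ^×-action of weight 1 on the xᵢ and weight −1 on l is ℂ[x₁l, …, xₙl], whose Proj is ℂℙ^{n−1}.) -/
open MvPolynomial Finset

lemma aeval_diag_monomial {m : ℕ} (c : Fin m → ℂ) (d : Fin m →₀ ℕ) (a : ℂ) :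
    aeval (fun i => C (c i) * X i) (monomial d a)
      = C (∏ i, c i ^ d i) * monomial d a := by
  rw [aeval_monomial, monomial_eq, Finsupp.prod, Finsupp.prod,
    Finset.prod_congr rfl (fun i _ => (by rw [mul_pow, C_pow] :
      (C (c i) * X i) ^ d i = C (c i ^ d i) * X i ^ d i)),
    Finset.prod_mul_distrib, ← map_prod]
  have h2 : (∏ i ∈ d.support, c i ^ d i) = ∏ i, c i ^ d i := by
    apply Finset.prod_subset (Finset.subset_univ _)
    intro i _ hi
    rw [Finsupp.notMem_support_iff.mp hi, pow_zero]
  rw [h2, algebraMap_eq]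
  ring

lemma coeff_aeval_diag {m : ℕ} (c : Fin m → ℂ) (f : MvPolynomial (Fin m) ℂ)
    (d : Fin m →₀ ℕ) :
    coeff d (aeval (fun i => C (c i) * X i) f) = (∏ i, c i ^ d i) * coeff d f := by
  induction f using MvPolynomial.induction_on' with
  | monomial d' a =>
      rw [aeval_diag_monomial, coeff_C_mul, coeff_monomial]
      split_ifs with h
      · subst h; rfl
      · simp
  | add p q hp hq =>
      rw [map_add, coeff_add, coeff_add, hp, hq, mul_add]

lemma prod_monomial_one {ι σ : Type*} (s : Finset ι) (g : ι → (σ →₀ ℕ)) :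
    (∏ i ∈ s, monomial (g i) (1 : ℂ)) = monomial (∑ i ∈ s, g i) 1 := by
  classical
  induction s using Finset.induction_on with
  | empty => simp
  | insert _ _ h ih => rw [Finset.prod_insert h, Finset.sum_insert h, ih, monomial_mul, one_mul]

/-- Let `f ∈ ℂ[X₁, …, Xₙ, L]` (the last variable of `Fin (n+1)` playing the role of `L`)
be invariant under the substitution `Xᵢ ↦ z Xᵢ`, `L ↦ z⁻¹ L` for every nonzero `z ∈ ℂ`.
Then `f` lies in the subalgebra generated by the products `X₁L, …, XₙL`: the invariant
ring for this `ℂˣ`-action is `ℂ[x₁ l, …, xₙ l]`, whose `Proj` is `ℂℙ^{n-1}`. -/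
theorem weight_invariants_generated_by_products (n : ℕ)
    (f : MvPolynomial (Fin (n + 1)) ℂ)
    (hf : ∀ z : ℂ, z ≠ 0 →
        aeval (fun i : Fin (n + 1) =>
            if (i : ℕ) < n then C z * X i else C z⁻¹ * X i) f = f) :
    f ∈ Algebra.adjoin ℂ
        {p : MvPolynomial (Fin (n + 1)) ℂ |
          ∃ i : Fin n, p = X i.castSucc * X (Fin.last n)} := by
  classical
  set c : Fin (n + 1) → ℂ := fun i => if (i : ℕ) < n then (2 : ℂ) else (2 : ℂ)⁻¹ with hc
  have hfun : (fun i : Fin (n + 1) =>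
      if (i : ℕ) < n then C (2:ℂ) * X i else C (2:ℂ)⁻¹ * X i)
      = fun i => C (c i) * X i := by
    funext i
    simp only [hc]
    split_ifs <;> rfl
  have hkey : ∀ d ∈ f.support, (∑ i : Fin n, d i.castSucc) = d (Fin.last n) := by
    intro d hd
    have h2 := congrArg (coeff d) (hf 2 two_ne_zero)
    rw [hfun, coeff_aeval_diag] at h2
    have hne : coeff d f ≠ 0 := MvPolynomial.mem_support_iff.mp hd
    have hprod : (∏ i, c i ^ d i) = 1 := by
      have := mul_right_cancel₀ hne (h2.trans (one_mul (coeff d f)).symm)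
      exact this
    rw [Fin.prod_univ_castSucc] at hprod
    have hlt : ∀ i : Fin n, ((i.castSucc : Fin (n+1)) : ℕ) < n := fun i => i.isLt
    have hcs : ∀ i : Fin n, c i.castSucc = 2 := by
      intro i; simp [hc, hlt i]
    have hcl : c (Fin.last n) = 2⁻¹ := by simp [hc]
    rw [hcl] at hprod
    have : (∏ i : Fin n, c i.castSucc ^ d i.castSucc) = 2 ^ ∑ i : Fin n, d i.castSucc := by
      rw [Finset.prod_congr rfl fun i _ => by rw [hcs i], Finset.prod_pow_eq_pow_sum]
    rw [this, inv_pow] at hprod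
    have h2B : (2:ℂ) ^ (d (Fin.last n)) ≠ 0 := pow_ne_zero _ two_ne_zero
    have heq : (2:ℂ) ^ (∑ i : Fin n, d i.castSucc) = 2 ^ (d (Fin.last n)) := by
      field_simp at hprod
      exact hprod
    have : ((2 ^ (∑ i : Fin n, d i.castSucc) : ℕ) : ℂ) = ((2 ^ (d (Fin.last n)) : ℕ) : ℂ) := by
      push_cast; exact heq
    exact Nat.pow_right_injective (le_refl 2) (Nat.cast_injective this)
  rw [f.as_sum]
  apply Subalgebra.sum_mem
  intro d hd
  have hsum := hkey d hd
  have hmono : (monomial d (1:ℂ))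
      = ∏ i : Fin n, (X i.castSucc * X (Fin.last n)) ^ d i.castSucc := by
    have : ∀ i : Fin n, (X i.castSucc * X (Fin.last n) : MvPolynomial (Fin (n+1)) ℂ) ^ d i.castSucc
        = monomial (d i.castSucc • (Finsupp.single i.castSucc 1 + Finsupp.single (Fin.last n) 1)) 1 := by
      intro i
      rw [X, X, monomial_mul, monomial_pow, one_mul, one_pow]
    rw [Finset.prod_congr rfl fun i _ => this i,
      prod_monomial_one Finset.univ
        (fun i : Fin n => d i.castSucc • (Finsupp.single i.castSucc 1 + Finsupp.single (Fin.last n) 1))]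
    have hd' : (∑ i : Fin n,
        d i.castSucc • (Finsupp.single i.castSucc 1 + Finsupp.single (Fin.last n) 1)) = d := by
      ext j
      rw [Finsupp.finset_sum_apply]
      induction j using Fin.lastCases with
      | last =>
          simp only [Finsupp.smul_apply, Finsupp.add_apply, Finsupp.single_apply]
          have : ∀ i : Fin n, (i.castSucc = Fin.last n) = False := by
            intro i
            simp only [Fin.ext_iff, Fin.coe_castSucc, Fin.val_last, eq_iff_iff, iff_false]
            exact Nat.ne_of_lt i.isLt
          simp only [this, if_false, if_pos rfl]
          simpa using hsum
      | cast k =>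
          simp only [Finsupp.smul_apply, Finsupp.add_apply, Finsupp.single_apply]
          have h1 : (Fin.last n = k.castSucc) = False := by
            simp only [Fin.ext_iff, Fin.coe_castSucc, Fin.val_last, eq_iff_iff, iff_false]
            exact Ne.symm (Nat.ne_of_lt k.isLt)
          simp only [h1, if_false, add_zero, smul_eq_mul, mul_ite, mul_one, mul_zero,
            Fin.castSucc_inj]
          rw [Finset.sum_ite_eq' Finset.univ k (fun i => d (Fin.castSucc i))]
          simp
    rw [hd']
  have h1 : monomial d (coeff d f) = C (coeff d f) * monomial d 1 := by
    rw [C_mul_monomial, mul_one]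
  rw [h1, hmono]
  apply Subalgebra.mul_mem
  · exact Subalgebra.algebraMap_mem _ _
  · apply Subalgebra.prod_mem
    intro i _
    apply Subalgebra.pow_mem
    exact Algebra.subset_adjoin ⟨i, rfl⟩
end

section
/- Let V be a vector space over ℂ (or any field), let k ≥ 1, and let (v₁, …, v_k) and (w₁, …, w_k) be two linearly independent families in V. If the wedge products satisfy v₁ ∧ ⋯ ∧ v_k = c • (w₁ ∧ ⋯ ∧ w_k) in the k-th exterior power ⋀ᵏ V for some scalar c, then span{v₁, …, v_k} = span{w₁, …, w_k}. (The Plücker embedding of the Grassmannian of k-planes into ℙ(⋀ᵏ ℂⁿ) is well defined and injective.) -/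
open ExteriorAlgebra

theorem ιMulti_ne_zero_of_linearIndependent {K V : Type*} [Field K] [AddCommGroup V]
    [Module K V] {n : ℕ} {f : Fin n → V} (hf : LinearIndependent K f) :
    ExteriorAlgebra.ιMulti K n f ≠ 0 := by
  -- construct an alternating map sending f to 1
  classical
  set p := Submodule.span K (Set.range f)
  obtain ⟨q, hq⟩ := Submodule.exists_isCompl p
  let proj : V →ₗ[K] p := p.linearProjOfIsCompl q hq
  let b : Module.Basis (Fin n) K p := Module.Basis.span hf
  let G : V →ₗ[K] (Fin n → K) :=
    (Finsupp.linearEquivFunOnFinite K K (Fin n)).toLinearMap ∘ₗ b.repr.toLinearMap ∘ₗ proj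
  let F : V [⋀^Fin n]→ₗ[K] K := Matrix.detRowAlternating.compLinearMap G
  have hFf : F f = 1 := by
    have hGf : ∀ i, G (f i) = Pi.single i 1 := by
      intro i
      have hproj : proj (f i) = b i := by
        have : f i ∈ p := Submodule.subset_span ⟨i, rfl⟩
        have h1 : proj (f i) = ⟨f i, this⟩ :=
          Submodule.linearProjOfIsCompl_apply_left hq ⟨f i, this⟩
        rw [h1]
        ext
        exact congrArg Subtype.val (Module.Basis.span_apply hf i).symm
      ext j
      simp [G, hproj, b.repr_self, Finsupp.single_apply, Pi.single_apply, eq_comm]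
    show Matrix.det (Matrix.of fun i => G (f i)) = 1
    have : (Matrix.of fun i => G (f i)) = 1 := by
      ext i j
      simp [hGf, Matrix.one_apply, Pi.single_apply, eq_comm]
    rw [this, Matrix.det_one]
  intro h0
  have := liftAlternating_apply_ιMulti (R := K) (M := V) (N := K)
    (fun i => if h : i = n then h ▸ F else 0) f
  rw [h0] at this
  simp at this
  rw [hFf] at this
  exact one_ne_zero this.symm

theorem wedge_mul_self_family_eq_zero {K V : Type*} [Field K] [AddCommGroup V]
    [Module K V] {k : ℕ} (f : Fin k → V) (i : Fin k) :
    ExteriorAlgebra.ι K (f i) * ExteriorAlgebra.ιMulti K k f = 0 := by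
  have h1 : ExteriorAlgebra.ι K (f i) * ExteriorAlgebra.ιMulti K k f
      = ExteriorAlgebra.ιMulti K (k + 1) (Fin.cons (f i) f) := by
    rw [ιMulti_succ_apply, Fin.cons_zero]
    congr 1
  rw [h1]
  exact (ιMulti K (k + 1)).map_eq_zero_of_eq (Fin.cons (f i) f) (i := 0) (j := i.succ)
    (by rw [Fin.cons_zero, Fin.cons_succ]) (Fin.succ_ne_zero i).symm

theorem mem_span_of_wedge_zero {K V : Type*} [Field K] [AddCommGroup V]
    [Module K V] {k : ℕ} {w : Fin k → V} (hw : LinearIndependent K w) {u : V}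
    (h : ExteriorAlgebra.ι K u * ExteriorAlgebra.ιMulti K k w = 0) :
    u ∈ Submodule.span K (Set.range w) := by
  by_contra hu
  have hli : LinearIndependent K (Fin.cons u w) := linearIndependent_fin_cons.2 ⟨hw, hu⟩
  apply ιMulti_ne_zero_of_linearIndependent hli
  rw [ιMulti_succ_apply]
  simpa [Matrix.vecTail, Fin.tail_cons] using h

/-- **Injectivity of the Plücker embedding.**  If two linearly independent `k`-tuples
`v` and `w` in a vector space `V` over a field have proportional wedge products
`v₁ ∧ ⋯ ∧ v_k = c • (w₁ ∧ ⋯ ∧ w_k)`, then they span the same `k`-dimensional subspace. -/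
theorem plucker_injective {K V : Type*} [Field K] [AddCommGroup V] [Module K V]
    (k : ℕ) (hk : 1 ≤ k) (v w : Fin k → V)
    (hv : LinearIndependent K v) (hw : LinearIndependent K w) (c : K)
    (h : ExteriorAlgebra.ιMulti K k v = c • ExteriorAlgebra.ιMulti K k w) :
    Submodule.span K (Set.range v) = Submodule.span K (Set.range w) := by
  have hvne : ExteriorAlgebra.ιMulti K k v ≠ 0 := ιMulti_ne_zero_of_linearIndependent hv
  have hc : c ≠ 0 := by rintro rfl; rw [zero_smul] at h; exact hvne h
  apply le_antisymm
  · rw [Submodule.span_le]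
    rintro _ ⟨i, rfl⟩
    apply mem_span_of_wedge_zero hw
    have h0 := wedge_mul_self_family_eq_zero (K := K) v i
    rw [h, mul_smul_comm] at h0
    exact (smul_eq_zero.1 h0).resolve_left hc
  · rw [Submodule.span_le]
    rintro _ ⟨i, rfl⟩
    by_contra hu
    have hli : LinearIndependent K (Fin.cons (w i) v) := linearIndependent_fin_cons.2 ⟨hv, hu⟩
    apply ιMulti_ne_zero_of_linearIndependent hli
    rw [ιMulti_succ_apply]
    simp only [Matrix.vecTail, Fin.cons_zero]
    have : ExteriorAlgebra.ι K (w i) * ExteriorAlgebra.ιMulti K k v = 0 := by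
      rw [h, mul_smul_comm, wedge_mul_self_family_eq_zero (K := K) w i, smul_zero]
    simpa [Matrix.vecTail, Fin.tail_cons] using this
end
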